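/- Let S be a dense subsemigroup of a semitopological semigroup (T,+) and e ∈ E(T). Then J_e(S) = {p ∈ e*_S : every A ∈ p is a J-set near e} is a compact subsemigroup of βS (provided it is nonempty). -/

import Mathlib

open Filter Topology Set

attribute [local instance] Ultrafilter.add Ultrafilter.addSemigroup

universe u

section NearIdem

variable {T : Type u} [AddCommSemigroup T] [TopologicalSpace T]

/-- The set of ultrafilters on `S` converging to `e` (denoted `e*_S`). -/
def EStar (S : AddSubsemigroup T) (e : T) : Set (Ultrafilter S) :=
  {p | ∀ U ∈ nhds e, {s : S | (s : T) ∈ U} ∈ p}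

/-- `B ⊆ S` is syndetic near `e`. -/
def SyndeticNear (S : AddSubsemigroup T) (e : T) (B : Set S) : Prop :=
  ∀ U ∈ nhds e, ∃ F : Finset S, (∀ t ∈ F, (t : T) ∈ U) ∧
    ∃ V ∈ nhds e, ∀ s : S, (s : T) ∈ V → ∃ t ∈ F, t + s ∈ B

/-- `A ⊆ S` is topologically piecewise syndetic near `e`. -/
def TopPWSNear (S : AddSubsemigroup T) (e : T) (A : Set S) : Prop :=
  ∀ U ∈ nhds e, ∃ F : Finset S, (∀ t ∈ F, (t : T) ∈ U) ∧
    ∃ V ∈ nhds e, ∀ G : Finset S, ∀ O ∈ nhds e, ∃ x : S, (x : T) ∈ O ∧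
      ∀ g ∈ G, (g : T) ∈ V → ∃ t ∈ F, t + (g + x) ∈ A

/-- Left ideal of a subsemigroup `E` of `βM`. -/
def IsLeftIdealIn {M : Type*} [AddSemigroup M] (E L : Set (Ultrafilter M)) : Prop :=
  L.Nonempty ∧ L ⊆ E ∧ ∀ p ∈ E, ∀ q ∈ L, p + q ∈ L

/-- Minimal left ideal of `E`. -/
def IsMinimalLeftIdealIn {M : Type*} [AddSemigroup M] (E L : Set (Ultrafilter M)) : Prop :=
  IsLeftIdealIn E L ∧ ∀ L', IsLeftIdealIn E L' → L' ⊆ L → L' = L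

/-- The smallest ideal `K(E)`, the union of all minimal left ideals of `E`. -/
def SmallestIdeal {M : Type*} [AddSemigroup M] (E : Set (Ultrafilter M)) : Set (Ultrafilter M) :=
  {p | ∃ L, IsMinimalLeftIdealIn E L ∧ p ∈ L}

/-- `T_p(x) = p`-`lim_(s ∈ S) T_s(x)`. -/
noncomputable def TP {M : Type*} {X : Type*} [TopologicalSpace X]
    (Ts : M → X → X) (p : Ultrafilter M) (x : X) : X :=
  (p.map fun s => Ts s x).lim

/-- `x` is a uniformly recurrent point near `e`. -/
def UnifRecNear (S : AddSubsemigroup T) (e : T) {X : Type*} [TopologicalSpace X]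
    (Ts : S → X → X) (x : X) : Prop :=
  ∀ W ∈ nhds x, SyndeticNear S e {s : S | Ts s x ∈ W}

/-- `x` and `y` are proximal near `e` (characterized via `e*_S`). -/
noncomputable def ProximalNear (S : AddSubsemigroup T) (e : T) {X : Type*} [TopologicalSpace X]
    (Ts : S → X → X) (x y : X) : Prop :=
  ∃ p ∈ EStar S e, TP Ts p x = TP Ts p y

/-- `a + ∑_(t ∈ H) f t`, computed along the increasing enumeration of `H`. -/
def addSum {M : Type*} [Add M] (a : M) (H : Finset ℕ) (f : ℕ → M) : M :=
  ((H.sort (· ≤ ·)).map f).foldl (· + ·) a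

/-- `A ⊆ S` is a `J`-set near `e`. -/
def JSetNear (S : AddSubsemigroup T) (e : T) (A : Set S) : Prop :=
  ∀ F : Finset (ℕ → S), (∀ f ∈ F, Tendsto (fun n => ((f n : S) : T)) atTop (nhds e)) →
    ∀ U ∈ nhds e, ∃ a : S, (a : T) ∈ U ∧ ∃ H : Finset ℕ, H.Nonempty ∧
      ∀ f ∈ F, addSum a H f ∈ A

/-- `J_e(S)`, the ultrafilters in `e*_S` all of whose members are `J`-sets near `e`. -/
def JeSet (S : AddSubsemigroup T) (e : T) : Set (Ultrafilter S) :=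
  {p | p ∈ EStar S e ∧ ∀ A ∈ p, JSetNear S e A}

/-- `𝒯_e`, the sequences in `S` converging to `e`. -/
def SeqToE (S : AddSubsemigroup T) (e : T) : Type _ :=
  {f : ℕ → S // Tendsto (fun n => ((f n : S) : T)) atTop (nhds e)}

/-- `A ⊆ S` is a `C`-set near `e` (combinatorial definition). -/
def CSetNear (S : AddSubsemigroup T) (e : T) (A : Set S) : Prop :=
  ∀ U ∈ nhds e,
    ∃ (α : Finset (SeqToE S e) → S) (H : Finset (SeqToE S e) → Finset ℕ),
      (∀ F, ((α F : S) : T) ∈ U) ∧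
      (∀ F, (H F).Nonempty) ∧
      (∀ F G, F ⊂ G → ∀ a ∈ H F, ∀ b ∈ H G, a < b) ∧
      (∀ (m : ℕ) (G : Fin (m + 1) → Finset (SeqToE S e)),
        (∀ i j, i < j → G i ⊂ G j) →
        ∀ f : Fin (m + 1) → SeqToE S e, (∀ i, f i ∈ G i) →
          (List.ofFn fun i : Fin m =>
              addSum (α (G i.succ)) (H (G i.succ)) (fun t => (f i.succ).1 t)).foldl (· + ·)
            (addSum (α (G 0)) (H (G 0)) (fun t => (f 0).1 t)) ∈ A)

variable [T2Space T]

section Aux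

private lemma foldl_add_assoc {M : Type*} [AddSemigroup M] (l : List M) (a b : M) :
    l.foldl (· + ·) (a + b) = a + l.foldl (· + ·) b := by
  induction l generalizing b with
  | nil => rfl
  | cons x l ih => simp only [List.foldl_cons, add_assoc, ih]

private lemma addSum_add_left {M : Type*} [AddSemigroup M] (a b : M) (H : Finset ℕ)
    (f : ℕ → M) : addSum (a + b) H f = a + addSum b H f := by
  unfold addSum; exact foldl_add_assoc _ a b

private lemma sort_union_of_lt (H₁ H₂ : Finset ℕ) (h : ∀ x ∈ H₁, ∀ y ∈ H₂, x < y) :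
    (H₁ ∪ H₂).sort (· ≤ ·) = H₁.sort (· ≤ ·) ++ H₂.sort (· ≤ ·) := by
  have hdisj : Disjoint H₁ H₂ := by
    rw [Finset.disjoint_left]
    intro a ha ha2
    exact lt_irrefl a (h a ha a ha2)
  apply List.Perm.eq_of_pairwise' (Finset.pairwise_sort _ _)
  · exact List.pairwise_append.2 ⟨Finset.pairwise_sort _ _, Finset.pairwise_sort _ _,
      fun x hx y hy => le_of_lt (h x ((Finset.mem_sort _).1 hx) y ((Finset.mem_sort _).1 hy))⟩
  · rw [← Multiset.coe_eq_coe, Finset.sort_eq, ← Multiset.coe_add, Finset.sort_eq,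
      Finset.sort_eq, ← Finset.disjUnion_eq_union _ _ hdisj]
    rfl

private lemma addSum_union {M : Type*} [AddSemigroup M] (a : M) {H₁ H₂ : Finset ℕ}
    (h : ∀ x ∈ H₁, ∀ y ∈ H₂, x < y) (f : ℕ → M) :
    addSum a (H₁ ∪ H₂) f = addSum (addSum a H₁ f) H₂ f := by
  unfold addSum
  rw [sort_union_of_lt H₁ H₂ h, List.map_append, List.foldl_append]

private lemma sort_image_add (H : Finset ℕ) (N : ℕ) :
    (H.image (· + N)).sort (· ≤ ·) = (H.sort (· ≤ ·)).map (· + N) := by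
  refine (fun h1 h2 h3 => List.Perm.eq_of_pairwise' (r := (· ≤ ·)) h2 h3 h1) ?_ ?_ ?_
  · rw [← Multiset.coe_eq_coe, Finset.sort_eq,
      Finset.image_val_of_injOn (fun x _ y _ hxy => add_left_injective N hxy),
      ← Finset.sort_eq H (· ≤ ·), Multiset.map_coe]
  · exact Finset.pairwise_sort _ _
  · exact List.Pairwise.map _ (fun a b hab => add_le_add_left hab N)
      (Finset.pairwise_sort _ _)

private lemma addSum_image_add {M : Type*} [AddSemigroup M] (a : M) (H : Finset ℕ)
    (N : ℕ) (f : ℕ → M) :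
    addSum a (H.image (· + N)) f = addSum a H (fun n => f (n + N)) := by
  unfold addSum
  rw [sort_image_add, List.map_map]
  rfl

end Aux

/-- `J_e(S)` is a compact subsemigroup of `βS` (provided it is nonempty). -/
theorem jeSet_compact_subsemigroup (S : AddSubsemigroup T) (hdense : Dense (S : Set T))
    (hl : ∀ t : T, Continuous fun x : T => t + x)
    (hr : ∀ t : T, Continuous fun x : T => x + t)
    (e : T) (he : e + e = e)
    (hne : (JeSet S e).Nonempty) :
    IsCompact (JeSet S e) ∧
      ∀ p ∈ JeSet S e, ∀ q ∈ JeSet S e, p + q ∈ JeSet S e := by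
  classical
  have hmem : ∀ (p q : Ultrafilter S) (A : Set S),
      A ∈ p + q ↔ {s : S | {t : S | s + t ∈ A} ∈ q} ∈ p := by
    intro p q A
    have h := Ultrafilter.eventually_add p q (· ∈ A)
    simpa only [Filter.eventually_iff, Ultrafilter.mem_coe, Set.setOf_mem_eq] using h
  constructor
  · -- compactness
    have hclosed : IsClosed (JeSet S e) := by
      have heq : JeSet S e =
          (⋂ U ∈ {U : Set T | U ∈ nhds e},
            {p : Ultrafilter S | {s : S | (s : T) ∈ U} ∈ p}) ∩
          ⋂ A ∈ {A : Set S | ¬ JSetNear S e A}, {p : Ultrafilter S | A ∈ p}ᶜ := by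
        ext p
        simp only [JeSet, EStar, Set.mem_setOf_eq, Set.mem_inter_iff, Set.mem_iInter,
          Set.mem_compl_iff]
        constructor
        · rintro ⟨h1, h2⟩
          exact ⟨h1, fun A hA hAp => hA (h2 A hAp)⟩
        · rintro ⟨h1, h2⟩
          refine ⟨h1, fun A hAp => ?_⟩
          by_contra hA
          exact h2 A hA hAp
      rw [heq]
      exact IsClosed.inter
        (isClosed_biInter fun U _ => ultrafilter_isClosed_basic _)
        (isClosed_biInter fun A _ => (ultrafilter_isOpen_basic _).isClosed_compl)
    exact hclosed.isCompact
  · rintro p ⟨hpE, hpJ⟩ q ⟨hqE, hqJ⟩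
    constructor
    · -- `e*_S` is closed under addition
      intro U hU
      rw [hmem]
      obtain ⟨W, hWU, hWopen, heW⟩ := mem_nhds_iff.1 hU
      have hV : (fun x : T => x + e) ⁻¹' W ∈ nhds e :=
        (hWopen.preimage (hr e)).mem_nhds (by simpa [he] using heW)
      refine Filter.mem_of_superset (hpE _ hV) ?_
      intro s hs
      have hVs : (fun x : T => (s : T) + x) ⁻¹' W ∈ nhds e :=
        (hWopen.preimage (hl (s : T))).mem_nhds hs
      refine Filter.mem_of_superset (hqE _ hVs) ?_
      intro t ht
      simp only [Set.mem_setOf_eq, AddMemClass.coe_add]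
      exact hWU ht
    · -- every member of `p + q` is a `J`-set near `e`
      intro A hA F hF U hU
      obtain ⟨W, hWU, hWopen, heW⟩ := mem_nhds_iff.1 hU
      have hB : {s : S | {t : S | s + t ∈ A} ∈ q} ∈ p := (hmem p q A).1 hA
      have hV : (fun x : T => x + e) ⁻¹' W ∈ nhds e :=
        (hWopen.preimage (hr e)).mem_nhds (by simpa [he] using heW)
      obtain ⟨a, haW, H₁, hH₁, ha⟩ := hpJ _ hB F hF _ hV
      set N : ℕ := H₁.max' hH₁ + 1 with hN
      have haW' : (a : T) + e ∈ W := haW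
      have hV' : (fun x : T => (a : T) + x) ⁻¹' W ∈ nhds e :=
        (hWopen.preimage (hl (a : T))).mem_nhds haW'
      set C : Set S := {t : S | ∀ f ∈ F, addSum a H₁ f + t ∈ A} with hCdef
      have hC : C ∈ q := by
        have hCeq : C = ⋂ f ∈ F, {t : S | addSum a H₁ f + t ∈ A} := by
          ext t
          simp [hCdef]
        rw [← Ultrafilter.mem_coe, hCeq]
        exact (Filter.biInter_finset_mem F).2 fun f hf => ha f hf
      have hF' : ∀ g ∈ F.image (fun f => fun n => f (n + N)),
          Tendsto (fun n => ((g n : S) : T)) atTop (nhds e) := by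
        intro g hg
        obtain ⟨f, hf, rfl⟩ := Finset.mem_image.1 hg
        exact (hF f hf).comp (tendsto_add_atTop_nat N)
      obtain ⟨a', ha'W, H', hH', hg⟩ := hqJ _ hC (F.image (fun f => fun n => f (n + N))) hF' _ hV'
      set H₂ : Finset ℕ := H'.image (· + N) with hH₂
      have hcross : ∀ x ∈ H₁, ∀ y ∈ H₂, x < y := by
        intro x hx y hy
        obtain ⟨h, _, rfl⟩ := Finset.mem_image.1 hy
        calc x ≤ H₁.max' hH₁ := Finset.le_max' _ _ hx
          _ < N := Nat.lt_succ_self _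
          _ ≤ h + N := Nat.le_add_left _ _
      refine ⟨a + a', ?_, H₁ ∪ H₂, hH₁.mono Finset.subset_union_left, ?_⟩
      · have : (a : T) + (a' : T) ∈ W := ha'W
        simp only [AddMemClass.coe_add]
        exact hWU this
      · intro f hf
        have hcalc : addSum (a + a') (H₁ ∪ H₂) f
            = addSum a H₁ f + addSum a' H' (fun n => f (n + N)) := by
          rw [addSum_union _ hcross f, add_comm a a', addSum_add_left,
            add_comm a' (addSum a H₁ f), addSum_add_left, hH₂, addSum_image_add]
        rw [hcalc]
        exact hg _ (Finset.mem_image_of_mem _ hf) f hf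

end NearIdem
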